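/- Every non-abelian nilpotent 3-dimensional Lie triple system over any field of characteristic ≠ 2 is isomorphic to the Lie triple system with basis e₁,e₂,e₃ and the only nonzero products (up to the symmetries forced by the axioms) given by [e₁,e₂,e₁] = e₃. -/

import Mathlib

structure LTS (F : Type*) [Field F] (T : Type*) [AddCommGroup T] [Module F T] where
  br : T → T → T → T
  add₁ : ∀ a b y z, br (a + b) y z = br a y z + br b y z
  smul₁ : ∀ (c : F) (a y z : T), br (c • a) y z = c • br a y z
  add₂ : ∀ x a b z, br x (a + b) z = br x a z + br x b z
  smul₂ : ∀ (c : F) (x a z : T), br x (c • a) z = c • br x a z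
  add₃ : ∀ x y a b, br x y (a + b) = br x y a + br x y b
  smul₃ : ∀ (c : F) (x y a : T), br x y (c • a) = c • br x y a
  A1 : ∀ x y z, br x y z + br y x z = 0
  A2 : ∀ x y z, br x y z + br y z x + br z x y = 0
  A3 : ∀ u v x y z, br u v (br x y z) = br (br u v x) y z + br x (br u v y) z + br x y (br u v z)

/-- A trilinear map between modules. -/
def Trilinear (F : Type*) [Field F] {T V : Type*} [AddCommGroup T] [Module F T]
    [AddCommGroup V] [Module F V] (θ : T → T → T → V) : Prop :=
  (∀ a b y z, θ (a + b) y z = θ a y z + θ b y z) ∧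
  (∀ (c : F) (a y z : T), θ (c • a) y z = c • θ a y z) ∧
  (∀ x a b z, θ x (a + b) z = θ x a z + θ x b z) ∧
  (∀ (c : F) (x a z : T), θ x (c • a) z = c • θ x a z) ∧
  (∀ x y a b, θ x y (a + b) = θ x y a + θ x y b) ∧
  (∀ (c : F) (x y a : T), θ x y (c • a) = c • θ x y a)

/-- A cocycle: a trilinear map satisfying (B1)–(B3). -/
def IsCocycle (F : Type*) [Field F] {T V : Type*} [AddCommGroup T] [Module F T]
    [AddCommGroup V] [Module F V] (L : LTS F T) (θ : T → T → T → V) : Prop :=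
  Trilinear F θ ∧
  (∀ x y z, θ x y z + θ y x z = 0) ∧
  (∀ x y z, θ x y z + θ y z x + θ z x y = 0) ∧
  (∀ u v x y z,
    θ u v (L.br x y z) + θ (L.br v u x) y z + θ x (L.br v u y) z + θ x y (L.br v u z) = 0)

/-- The bracket of the annihilator extension `T ⊕ V`. -/
def extBr (F : Type*) [Field F] {T V : Type*} [AddCommGroup T] [Module F T]
    [AddCommGroup V] [Module F V] (L : LTS F T) (θ : T → T → T → V) :
    T × V → T × V → T × V → T × V :=
  fun p q r => (L.br p.1 q.1 r.1, θ p.1 q.1 r.1)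

/-- The annihilator of a Lie triple system, as a set. -/
def AnnSet (F : Type*) [Field F] {T : Type*} [AddCommGroup T] [Module F T]
    (L : LTS F T) : Set T :=
  {x | ∀ y z, L.br x y z = 0}

/-- The radical of a trilinear map. -/
def RadSet (F : Type*) [Field F] {T V : Type*} [AddCommGroup T] [Module F T]
    [AddCommGroup V] [Module F V] (θ : T → T → T → V) : Set T :=
  {x | ∀ y z, θ x y z = 0}

/-- The lower central series `T⁽⁰⁾ = T`, `T⁽ⁿ⁺¹⁾ = [T⁽ⁿ⁾, T, T]`. -/
def derSeq (F : Type*) [Field F] {T : Type*} [AddCommGroup T] [Module F T]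
    (L : LTS F T) : ℕ → Submodule F T
  | 0 => ⊤
  | n + 1 => Submodule.span F {w | ∃ a ∈ derSeq F L n, ∃ y z : T, w = L.br a y z}

/-- A Lie triple system is nilpotent if its lower central series terminates. -/
def IsNilpotentLTS (F : Type*) [Field F] {T : Type*} [AddCommGroup T] [Module F T]
    (L : LTS F T) : Prop :=
  ∃ m, derSeq F L m = ⊥

/-- Isomorphism of Lie triple systems. -/
def LTSIso (F : Type*) [Field F] {T₁ T₂ : Type*} [AddCommGroup T₁] [Module F T₁]
    [AddCommGroup T₂] [Module F T₂] (L₁ : LTS F T₁) (L₂ : LTS F T₂) : Prop :=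
  ∃ e : T₁ ≃ₗ[F] T₂, ∀ x y z, e (L₁.br x y z) = L₂.br (e x) (e y) (e z)

/-- A coboundary: a map of the form `δf(x,y,z) = f([x,y,z])`. -/
def IsCoboundary (F : Type*) [Field F] {T V : Type*} [AddCommGroup T] [Module F T]
    [AddCommGroup V] [Module F V] (L : LTS F T) (θ : T → T → T → V) : Prop :=
  ∃ f : T →ₗ[F] V, ∀ x y z, θ x y z = f (L.br x y z)


section Helpers

variable {F : Type*} [Field F] {T : Type*} [AddCommGroup T] [Module F T] (L : LTS F T)

lemma LTS.swap (x y z : T) : L.br y x z = -L.br x y z :=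
  eq_neg_of_add_eq_zero_right (L.A1 x y z)

lemma LTS.br_self (h2 : (2:F) ≠ 0) (x z : T) : L.br x x z = 0 := by
  have h : (2:F) • L.br x x z = 0 := by rw [two_smul]; exact L.A1 x x z
  exact (smul_eq_zero.mp h).resolve_left h2

lemma derSeq_succ_eq (n : ℕ) :
    derSeq F L (n+1) =
      Submodule.span F {w | ∃ a ∈ derSeq F L n, ∃ y z : T, w = L.br a y z} := rfl

lemma mem_derSeq_succ {n : ℕ} {a : T} (ha : a ∈ derSeq F L n) (y z : T) :
    L.br a y z ∈ derSeq F L (n+1) :=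
  Submodule.subset_span ⟨a, ha, y, z, rfl⟩

lemma derSeq_succ_le (n : ℕ) : derSeq F L (n+1) ≤ derSeq F L n := by
  induction n with
  | zero => exact le_top
  | succ n ih =>
      rw [derSeq_succ_eq, derSeq_succ_eq]
      apply Submodule.span_le.mpr
      rintro w ⟨a, ha, y, z, rfl⟩
      exact Submodule.subset_span ⟨a, ih ha, y, z, rfl⟩

lemma derSeq_le_of_le {m n : ℕ} (h : m ≤ n) : derSeq F L n ≤ derSeq F L m := by
  induction n with
  | zero => simp_all
  | succ n ih =>
      rcases Nat.lt_or_ge m (n+1) with h' | h'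
      · exact le_trans (derSeq_succ_le L n) (ih (Nat.lt_succ_iff.mp h'))
      · have : m = n + 1 := le_antisymm h h'
        rw [this]

lemma derSeq_stab {n : ℕ} (h : derSeq F L (n+1) = derSeq F L n)
    (hnil : IsNilpotentLTS F L) : derSeq F L n = ⊥ := by
  have key : ∀ k, derSeq F L (n+k) = derSeq F L n := by
    intro k
    induction k with
    | zero => rfl
    | succ k ih =>
        calc derSeq F L (n+(k+1)) = derSeq F L ((n+k)+1) := rfl
        _ = derSeq F L (n+1) := by rw [derSeq_succ_eq, derSeq_succ_eq, ih]
        _ = derSeq F L n := h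
  obtain ⟨m, hm⟩ := hnil
  have h1 : derSeq F L (n+m) ≤ derSeq F L m := derSeq_le_of_le L (Nat.le_add_left m n)
  rw [key m, hm] at h1
  exact le_bot_iff.mp h1

end Helpers

theorem stmt13 {F : Type*} [Field F] (h2 : (2 : F) ≠ 0)
    {T : Type*} [AddCommGroup T] [Module F T] [FiniteDimensional F T]
    (hd : Module.finrank F T = 3) (L : LTS F T) (hnil : IsNilpotentLTS F L)
    (hnab : ¬ ∀ x y z, L.br x y z = 0) :
    ∃ B : Module.Basis (Fin 3) F T, ∀ i j k : Fin 3,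
      L.br (B i) (B j) (B k) =
        if i = 0 ∧ j = 1 ∧ k = 0 then B 2
        else if i = 1 ∧ j = 0 ∧ k = 0 then -B 2
        else 0 := by
  classical
  set D1 := derSeq F L 1 with hD1def
  set D2 := derSeq F L 2 with hD2def
  -- D1 nontrivial
  have hbrD1 : ∀ x y z : T, L.br x y z ∈ D1 := fun x y z =>
    mem_derSeq_succ L Submodule.mem_top y z
  have hD1ne : D1 ≠ ⊥ := by
    intro hbot
    apply hnab
    intro x y z
    have := hbrD1 x y z
    rw [hbot, Submodule.mem_bot] at this
    exact this
  -- codimension of D1 is at least 2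
  have hcod : 2 ≤ Module.finrank F (T ⧸ D1) := by
    by_contra hlt
    push_neg at hlt
    obtain ⟨v, hv⟩ := (finrank_le_one_iff (K := F) (V := T ⧸ D1)).mp (by omega)
    obtain ⟨e, he⟩ := Submodule.mkQ_surjective D1 v
    have hrep' : ∀ x : T, ∃ c : F, x - c • e ∈ D1 := by
      intro x
      obtain ⟨c, hc⟩ := hv (D1.mkQ x)
      refine ⟨c, ?_⟩
      have : D1.mkQ (x - c • e) = 0 := by
        rw [map_sub, map_smul, he, hc]; abel
      rwa [← LinearMap.mem_ker, Submodule.ker_mkQ] at this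
    have hbr2 : ∀ x y z : T, L.br x y z ∈ D2 := by
      intro x y z
      obtain ⟨cx, hx⟩ := hrep' x
      obtain ⟨cy, hy⟩ := hrep' y
      have hx' : x = cx • e + (x - cx • e) := by abel
      have hy' : y = cy • e + (y - cy • e) := by abel
      rw [hx', L.add₁, L.smul₁]
      have t1 : L.br (x - cx • e) y z ∈ D2 := mem_derSeq_succ L hx y z
      have t2 : L.br e y z ∈ D2 := by
        rw [hy', L.add₂, L.smul₂, LTS.br_self L h2, smul_zero, zero_add]
        have : L.br (y - cy • e) e z ∈ D2 := mem_derSeq_succ L hy e z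
        rw [LTS.swap]
        exact D2.neg_mem this
      exact D2.add_mem (D2.smul_mem cx t2) t1
    have hle : D1 ≤ D2 := by
      rw [hD1def, derSeq_succ_eq]
      apply Submodule.span_le.mpr
      rintro w ⟨a, -, y, z, rfl⟩
      exact hbr2 a y z
    have heq : derSeq F L 2 = derSeq F L 1 :=
      le_antisymm (derSeq_succ_le L 1) hle
    exact hD1ne (derSeq_stab L heq hnil)
  have hquot : Module.finrank F (T ⧸ D1) + Module.finrank F D1 = 3 := by
    rw [D1.finrank_quotient_add_finrank, hd]
  have hD1pos : Module.finrank F D1 ≠ 0 := by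
    intro h
    exact hD1ne (Submodule.finrank_eq_zero.mp h)
  have hfD1 : Module.finrank F D1 = 1 := by omega
  have hquot2 : Module.finrank F (T ⧸ D1) = 2 := by omega
  -- D2 = ⊥
  have hD2bot : D2 = ⊥ := by
    rcases eq_or_lt_of_le (derSeq_succ_le L 1 : D2 ≤ D1) with h | h
    · exact absurd (derSeq_stab L h hnil) hD1ne
    · have := Submodule.finrank_lt_finrank_of_lt h
      rw [hfD1] at this
      exact Submodule.finrank_eq_zero.mp (Nat.lt_one_iff.mp this)
  -- annihilator lemmas
  have hann1 : ∀ a, a ∈ D1 → ∀ y z : T, L.br a y z = 0 := by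
    intro a ha y z
    have := mem_derSeq_succ L ha y z
    rwa [← hD2def, hD2bot, Submodule.mem_bot] at this
  have hann2 : ∀ a, a ∈ D1 → ∀ y z : T, L.br y a z = 0 := by
    intro a ha y z
    rw [LTS.swap, hann1 a ha, neg_zero]
  have hann3 : ∀ a, a ∈ D1 → ∀ y z : T, L.br y z a = 0 := by
    intro a ha y z
    have h := L.A2 y z a
    rw [hann2 a ha, hann1 a ha, add_zero, add_zero] at h
    exact h
  -- basis of the quotient and lifts
  have : FiniteDimensional F (T ⧸ D1) := inferInstance
  let q : Module.Basis (Fin 2) F (T ⧸ D1) := Module.finBasisOfFinrankEq F _ hquot2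
  obtain ⟨u1, hu1⟩ := Submodule.mkQ_surjective D1 (q 0)
  obtain ⟨u2, hu2⟩ := Submodule.mkQ_surjective D1 (q 1)
  have hrep : ∀ x : T, ∃ a b : F, ∃ d : T, d ∈ D1 ∧ x = a • u1 + b • u2 + d := by
    intro x
    refine ⟨q.repr (D1.mkQ x) 0, q.repr (D1.mkQ x) 1,
      x - (q.repr (D1.mkQ x) 0 • u1 + q.repr (D1.mkQ x) 1 • u2), ?_, by abel⟩
    have hsum : D1.mkQ x = q.repr (D1.mkQ x) 0 • q 0 + q.repr (D1.mkQ x) 1 • q 1 := by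
      conv_lhs => rw [← q.sum_repr (D1.mkQ x)]
      rw [Fin.sum_univ_two]
    have : D1.mkQ (x - (q.repr (D1.mkQ x) 0 • u1 + q.repr (D1.mkQ x) 1 • u2)) = 0 := by
      rw [map_sub, map_add, map_smul, map_smul, hu1, hu2, sub_eq_zero]
      exact hsum
    rwa [← LinearMap.mem_ker, Submodule.ker_mkQ] at this
  have hind : ∀ c1 c2 : F, c1 • u1 + c2 • u2 ∈ D1 → c1 = 0 ∧ c2 = 0 := by
    intro c1 c2 hc
    have h0 : D1.mkQ (c1 • u1 + c2 • u2) = 0 := by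
      rwa [← LinearMap.mem_ker, Submodule.ker_mkQ]
    rw [map_add, map_smul, map_smul, hu1, hu2] at h0
    have hli := Fintype.linearIndependent_iff.mp q.linearIndependent ![c1, c2]
      (by rw [Fin.sum_univ_two]; simpa using h0)
    exact ⟨hli 0, hli 1⟩
  set w1 := L.br u1 u2 u1 with hw1def
  set w2 := L.br u1 u2 u2 with hw2def
  have hw1D : w1 ∈ D1 := hbrD1 _ _ _
  have hw2D : w2 ∈ D1 := hbrD1 _ _ _
  -- the expansion lemma
  have EXP : ∀ (a1 b1 a2 b2 a3 b3 : F) (d1 d2 d3 : T), d1 ∈ D1 → d2 ∈ D1 → d3 ∈ D1 →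
      L.br (a1 • u1 + b1 • u2 + d1) (a2 • u1 + b2 • u2 + d2) (a3 • u1 + b3 • u2 + d3)
        = (a1 * b2 - b1 * a2) • (a3 • w1 + b3 • w2) := by
    intro a1 b1 a2 b2 a3 b3 d1 d2 d3 hd1 hd2 hd3
    simp only [L.add₁, L.smul₁, L.add₂, L.smul₂, L.add₃, L.smul₃,
      hann1 d1 hd1, hann2 d2 hd2, hann3 d3 hd3,
      LTS.br_self L h2, LTS.swap L u1 u2,
      smul_zero, add_zero, zero_add, smul_neg, ← hw1def, ← hw2def]
    module
  -- find some nonzero bracket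
  obtain ⟨x0, hx0'⟩ := not_forall.mp hnab
  obtain ⟨y0, hy0'⟩ := not_forall.mp hx0'
  obtain ⟨z0, hbr0⟩ := not_forall.mp hy0'
  obtain ⟨a1, b1, d1, hd1, hx0⟩ := hrep x0
  obtain ⟨a2, b2, d2, hd2, hy0⟩ := hrep y0
  obtain ⟨a3, b3, d3, hd3, hz0⟩ := hrep z0
  -- construct the good pair f1 f2 and e3
  obtain ⟨f1, f2, e3, hf121, hf122, he3ne, he3D, hindf⟩ :
      ∃ f1 f2 e3 : T, L.br f1 f2 f1 = e3 ∧ L.br f1 f2 f2 = 0 ∧ e3 ≠ 0 ∧ e3 ∈ D1 ∧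
        (∀ c1 c2 : F, c1 • f1 + c2 • f2 ∈ D1 → c1 = 0 ∧ c2 = 0) := by
    by_cases hw1 : w1 = 0
    · have hw2 : w2 ≠ 0 := by
        intro hw2
        apply hbr0
        rw [hx0, hy0, hz0, EXP a1 b1 a2 b2 a3 b3 d1 d2 d3 hd1 hd2 hd3, hw1, hw2]
        simp
      refine ⟨u2, u1, -w2, ?_, ?_, neg_ne_zero.mpr hw2, D1.neg_mem hw2D, ?_⟩
      · rw [LTS.swap L u1 u2, ← hw2def]
      · rw [LTS.swap L u1 u2, ← hw1def, hw1, neg_zero]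
      · intro c1 c2 hc
        have := hind c2 c1 (by rw [show c2 • u1 + c1 • u2 = c1 • u2 + c2 • u1 by abel]; exact hc)
        exact ⟨this.2, this.1⟩
    · -- w1 ≠ 0 : D1 = span {w1}
      have hspan : Submodule.span F {w1} = D1 := by
        apply Submodule.eq_of_le_of_finrank_le
          ((Submodule.span_singleton_le_iff_mem w1 D1).mpr hw1D)
        rw [hfD1, finrank_span_singleton hw1]
      obtain ⟨γ, hγ⟩ := Submodule.mem_span_singleton.mp (hspan ▸ hw2D)
      refine ⟨u1, u2 + (-γ) • u1, w1, ?_, ?_, hw1, hw1D, ?_⟩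
      · rw [L.add₂, L.smul₂, LTS.br_self L h2, smul_zero, add_zero, ← hw1def]
      · rw [L.add₂, L.smul₂, LTS.br_self L h2, smul_zero, add_zero,
          L.add₃, L.smul₃, ← hw1def, ← hw2def, ← hγ]
        module
      · intro c1 c2 hc
        have hc' : (c1 + c2 * (-γ)) • u1 + c2 • u2 ∈ D1 := by
          rw [show (c1 + c2 * (-γ)) • u1 + c2 • u2 = c1 • u1 + c2 • (u2 + (-γ) • u1) by module]
          exact hc
        have h := hind _ _ hc'
        refine ⟨?_, h.2⟩
        have := h.1
        rw [h.2, zero_mul, add_zero] at this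
        exact this
  -- linear independence of f1 f2 e3
  have hli : LinearIndependent F ![f1, f2, e3] := by
    rw [Fintype.linearIndependent_iff]
    intro g hg
    rw [Fin.sum_univ_three] at hg
    simp only [Matrix.cons_val_zero, Matrix.cons_val_one, Matrix.head_cons,
      Matrix.cons_val_two, Matrix.tail_cons] at hg
    have hmem : g 0 • f1 + g 1 • f2 ∈ D1 := by
      have : g 0 • f1 + g 1 • f2 = -(g 2 • e3) := eq_neg_of_add_eq_zero_left hg
      rw [this]
      exact D1.neg_mem (D1.smul_mem _ he3D)
    obtain ⟨h0, h1⟩ := hindf _ _ hmem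
    have h2' : g 2 = 0 := by
      rw [h0, h1, zero_smul, zero_smul, zero_add, zero_add] at hg
      exact (smul_eq_zero.mp hg).resolve_right he3ne
    intro i
    fin_cases i <;> assumption
  let B : Module.Basis (Fin 3) F T := basisOfLinearIndependentOfCardEqFinrank hli (by simp [hd])
  have hB : ⇑B = ![f1, f2, e3] := coe_basisOfLinearIndependentOfCardEqFinrank hli _
  refine ⟨B, ?_⟩
  have p1 : ∀ y z : T, L.br e3 y z = 0 := hann1 e3 he3D
  have p2 : ∀ y z : T, L.br y e3 z = 0 := hann2 e3 he3D
  have p3 : ∀ y z : T, L.br y z e3 = 0 := hann3 e3 he3D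
  have s1 : ∀ z : T, L.br f1 f1 z = 0 := LTS.br_self L h2 f1
  have s2 : ∀ z : T, L.br f2 f2 z = 0 := LTS.br_self L h2 f2
  have hf211 : L.br f2 f1 f1 = -e3 := by rw [LTS.swap, hf121]
  have hf212 : L.br f2 f1 f2 = 0 := by rw [LTS.swap, hf122, neg_zero]
  intro i j k
  fin_cases i <;> fin_cases j <;> fin_cases k <;>
    simp [hB, p1, p2, p3, s1, s2, hf121, hf122, hf211, hf212]
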